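/- For every integer v ≥ 2, the Karoubi envelope (idempotent completion) of the full subcategory C_v of finite types spanned by the types Fin r → Fin v (r : ℕ) is equivalent to the full subcategory of the category of finite types spanned by the nonempty finite types. (This is the paper's claim that the idempotent completion of the category of free v-valued Post algebras is, up to opposites, the category of nonempty finite sets, independently of v.) -/

import Mathlib

open CategoryTheory

universe u w

/-- The property of a finite type of being (bijective to) a finitely generated
free `v`-valued Post algebra, i.e. of the form `Fin r → Fin v`. -/
def IsPostAlg (v : ℕ) (X : FintypeCat) : Prop :=
  ∃ r : ℕ, Nonempty (X ≃ (Fin r → Fin v))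

/-- `C_v`: the full subcategory of the category of finite types spanned by the
types `Fin r → Fin v`; the category of finitely generated free `v`-valued Post
algebras is its opposite. -/
abbrev PostCat (v : ℕ) := ObjectProperty.FullSubcategory (IsPostAlg v)

/-- The full subcategory of the category of finite types spanned by the
nonempty finite types. -/
abbrev NonemptyFintypeCat := ObjectProperty.FullSubcategory (fun X : FintypeCat => Nonempty X)

section Aux

variable {v : ℕ}

open Idempotents

def FixPt (P : Karoubi (PostCat.{u} v)) := {x : P.X.obj // P.p x = x}

lemma p_fix (P : Karoubi (PostCat.{u} v)) (x : P.X.obj) : P.p (P.p x) = P.p x := by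
  rw [show P.p (P.p x) = (P.p ≫ P.p) x from rfl, P.idem]

noncomputable instance (P : Karoubi (PostCat.{u} v)) : Fintype (FixPt P) := by
  classical exact @Subtype.fintype _ _ _ FintypeCat.fintype

lemma fix_nonempty (hv : 2 ≤ v) (P : Karoubi (PostCat.{u} v)) : Nonempty (FixPt P) := by
  obtain ⟨r, ⟨e⟩⟩ := P.X.property
  have : Nonempty (Fin v) := ⟨⟨0, by omega⟩⟩
  have hx : Nonempty P.X.obj := ⟨e.symm (fun _ => Classical.arbitrary _)⟩
  obtain ⟨x⟩ := hx
  exact ⟨⟨P.p x, p_fix P x⟩⟩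

noncomputable def fixFunctor (hv : 2 ≤ v) :
    Karoubi (PostCat.{u} v) ⥤ NonemptyFintypeCat.{u} where
  obj P := ⟨FintypeCat.of (FixPt P), fix_nonempty hv P⟩
  map {P Q} f := ObjectProperty.homMk (FintypeCat.homMk fun (x : FixPt P) =>
    (⟨f.f x.1, ConcreteCategory.congr_hom (Karoubi.comp_p f) x.1⟩ : FixPt Q))
  map_id P := by
    ext x
    exact Subtype.ext x.2
  map_comp f g := rfl

lemma fixFunctor_faithful (hv : 2 ≤ v) : (fixFunctor.{u} hv).Faithful where
  map_injective {P Q f g} h := by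
    ext x
    have h1 : f.f (P.p x) = g.f (P.p x) := by
      have := congrArg Subtype.val (ConcreteCategory.congr_hom (congrArg InducedCategory.Hom.hom h)
        (show FixPt P from ⟨P.p x, p_fix P x⟩))
      exact this
    have hf : f.f (P.p x) = f.f x := ConcreteCategory.congr_hom (Karoubi.p_comp f) x
    have hg : g.f (P.p x) = g.f x := ConcreteCategory.congr_hom (Karoubi.p_comp g) x
    rw [hf, hg] at h1
    exact h1

lemma fixFunctor_full (hv : 2 ≤ v) : (fixFunctor.{u} hv).Full where
  map_surjective {P Q} φ := by
    refine ⟨⟨ObjectProperty.homMk (FintypeCat.homMk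
      fun x => (φ.hom (show FixPt P from ⟨P.p x, p_fix P x⟩)).1), ?_⟩, ?_⟩
    · ext x
      symm
      show _ = Q.p ((φ.hom (show FixPt P from ⟨P.p (P.p x), p_fix P (P.p x)⟩)).1)
      have h2 : (show FixPt P from ⟨P.p (P.p x), p_fix P (P.p x)⟩)
          = ⟨P.p x, p_fix P x⟩ := Subtype.ext (p_fix P x)
      rw [h2, (φ.hom (show FixPt P from ⟨P.p x, p_fix P x⟩)).2]
      rfl
    · ext x
      refine Subtype.ext ?_
      show (φ.hom (show FixPt P from ⟨P.p x.1, p_fix P x.1⟩)).1 = (φ.hom x).1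
      have : (show FixPt P from ⟨P.p x.1, p_fix P x.1⟩) = x := Subtype.ext x.2
      rw [this]

lemma fixFunctor_essSurj (hv : 2 ≤ v) : (fixFunctor.{u} hv).EssSurj where
  mem_essImage Z := by
    obtain ⟨Zobj, hZ⟩ := Z
    letI : Fintype Zobj := FintypeCat.fintype
    set n := Fintype.card Zobj with hn
    have hcard : Fintype.card Zobj ≤ Fintype.card (ULift.{u} (Fin n → Fin v)) := by
      simp only [Fintype.card_ulift, Fintype.card_fun, Fintype.card_fin]
      calc n ≤ 2 ^ n := Nat.le_of_lt (Nat.lt_two_pow_self)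
      _ ≤ v ^ n := Nat.pow_le_pow_left hv n
    obtain ⟨ι⟩ := Function.Embedding.nonempty_of_card_le hcard
    have hZ' : Nonempty Zobj := hZ
    set s : ULift.{u} (Fin n → Fin v) → Zobj := Function.invFun ι
    have hsι : ∀ z, s (ι z) = z := Function.leftInverse_invFun ι.injective
    set X : PostCat.{u} v := ⟨FintypeCat.of (ULift.{u} (Fin n → Fin v)), ⟨n, ⟨Equiv.ulift⟩⟩⟩
    set p : X ⟶ X := ObjectProperty.homMk (FintypeCat.homMk fun x => ι (s x))
    have hidem : p ≫ p = p := by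
      ext x : 2
      show ι (s (ι (s x))) = ι (s x)
      rw [hsι]
    set P : Karoubi (PostCat.{u} v) := ⟨X, p, hidem⟩
    refine ⟨P, ⟨?_⟩⟩
    refine Iso.mk (ObjectProperty.homMk (FintypeCat.homMk fun x : FixPt P => s x.1))
      (ObjectProperty.homMk (FintypeCat.homMk
        fun z => (show FixPt P from ⟨ι z, by show ι (s (ι z)) = ι z; rw [hsι]⟩))) ?_ ?_
    · ext x
      refine Subtype.ext ?_
      show ι (s x.1) = x.1
      exact x.2
    · ext z
      exact hsι z

/-- Universe-switch functor for nonempty finite types. -/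
noncomputable def uBridge : NonemptyFintypeCat.{u} ⥤ NonemptyFintypeCat.{w} :=
  ObjectProperty.lift _ (ObjectProperty.ι _ ⋙ FintypeCat.uSwitch.{u, w})
    (fun X => Nonempty.map (FintypeCat.uSwitchEquiv _).symm X.property)

instance : FintypeCat.uSwitch.{u, w}.IsEquivalence :=
  FintypeCat.uSwitchEquivalence.isEquivalence_functor

lemma uBridge_comp_inclusion :
    uBridge.{u, w} ⋙ ObjectProperty.ι _ =
      ObjectProperty.ι _ ⋙ FintypeCat.uSwitch.{u, w} :=
  rfl

lemma uBridge_faithful : uBridge.{u, w}.Faithful := by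
  have h : (uBridge.{u, w} ⋙ ObjectProperty.ι _).Faithful := by
    rw [uBridge_comp_inclusion]
    infer_instance
  exact Functor.Faithful.of_comp uBridge.{u, w} (ObjectProperty.ι _)

lemma uBridge_full : uBridge.{u, w}.Full := by
  have h : (uBridge.{u, w} ⋙ ObjectProperty.ι _).Full := by
    rw [uBridge_comp_inclusion]
    infer_instance
  exact Functor.Full.of_comp_faithful uBridge.{u, w} (ObjectProperty.ι _)

lemma uBridge_essSurj : uBridge.{u, w}.EssSurj where
  mem_essImage Z := by
    have hZ : Nonempty Z.obj := Z.property
    letI : Fintype Z.obj := FintypeCat.fintype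
    set W : NonemptyFintypeCat.{u} :=
      ⟨FintypeCat.of (ULift.{u} (Fin (Fintype.card Z.obj))),
        ⟨⟨(Fintype.equivFin Z.obj) (Classical.arbitrary _)⟩⟩⟩
    refine ⟨W, ⟨?_⟩⟩
    have e : (FintypeCat.uSwitch.{u, w}.obj W.obj) ≃ Z.obj :=
      (FintypeCat.uSwitchEquiv W.obj).trans
        (Equiv.ulift.trans (Fintype.equivFin Z.obj).symm)
    exact (ObjectProperty.fullyFaithfulι _).preimageIso
      (FintypeCat.equivEquivIso e)

end Aux

/-- For every integer `v ≥ 2`, the Karoubi envelope (idempotent completion) of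
the category `C_v` of finitely generated free `v`-valued Post algebras is
equivalent to the category of nonempty finite types. -/
theorem karoubi_post_equiv_nonempty_fintype (v : ℕ) (hv : 2 ≤ v) :
    Nonempty (Idempotents.Karoubi (PostCat v) ≌ NonemptyFintypeCat) := by
  have e1 : (fixFunctor (v := v) hv).IsEquivalence :=
    ⟨fixFunctor_faithful hv, fixFunctor_full hv, fixFunctor_essSurj hv⟩
  have e2 : uBridge.IsEquivalence := ⟨uBridge_faithful, uBridge_full, uBridge_essSurj⟩
  exact ⟨(fixFunctor hv).asEquivalence.trans uBridge.asEquivalence⟩
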